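/- For every integer n ≥ 1 and every pattern pair p ∈ {(011,021), (010,021)}, the number of inversion sequences of length n avoiding both patterns of p equals the n-th Catalan number C_n = binom(2n,n)/(n+1), i.e. |I_n(p)| = C_n. -/
import Mathlib


/-- An inversion sequence of length `n` (0-indexed): `e i ≤ i` for all `i`. -/
def InvSeq {n : ℕ} (e : Fin n → ℕ) : Prop := ∀ i : Fin n, e i ≤ (i : ℕ)

/-- `e` contains the pattern `p` (a word of nonnegative integers): there is a
strictly increasing choice of positions on which `e` is order-isomorphic to `p`. -/
def Contains {n : ℕ} (e : Fin n → ℕ) (p : List ℕ) : Prop :=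
  ∃ s : Fin p.length → Fin n, StrictMono s ∧
    ∀ a b : Fin p.length,
      (p.get a < p.get b ↔ e (s a) < e (s b)) ∧
      (p.get a = p.get b ↔ e (s a) = e (s b))

/-- `e` avoids the pattern `p`. -/
def Avoids {n : ℕ} (e : Fin n → ℕ) (p : List ℕ) : Prop := ¬ Contains e p

/-- The number of zero entries of `e`. -/
def zeroStat {n : ℕ} (e : Fin n → ℕ) : ℕ :=
  (Finset.univ.filter (fun i : Fin n => e i = 0)).card

/-- The number of distinct positive values among the entries of `e`. -/
def distStat {n : ℕ} (e : Fin n → ℕ) : ℕ :=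
  ((Finset.univ.image e).filter (fun v => 0 < v)).card

/-- The number of repeated entries of `e`: `n - dist e`. -/
def repStat {n : ℕ} (e : Fin n → ℕ) : ℕ := n - distStat e

/-- The number of saturated entries of `e` (1-indexed: `e_i = i - 1`). -/
def satuStat {n : ℕ} (e : Fin n → ℕ) : ℕ :=
  (Finset.univ.filter (fun i : Fin n => e i = (i : ℕ))).card

/-- glue a head of length k, value k at position k, and shifted tail -/
def glue {n : ℕ} (k : Fin (n+1)) (f : Fin (k:ℕ) → ℕ) (g : Fin (n - (k:ℕ)) → ℕ)
    (i : Fin (n+1)) : ℕ :=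
  if h1 : (i:ℕ) < k then f ⟨i, h1⟩
  else if h2 : (i:ℕ) = k then (k:ℕ)
  else g ⟨(i:ℕ) - ((k:ℕ)+1), by have hi := i.isLt; have hk := k.isLt; omega⟩ + k

lemma glue_invSeq {n : ℕ} (k : Fin (n+1)) (f : Fin (k:ℕ) → ℕ) (g : Fin (n - (k:ℕ)) → ℕ)
    (hf : InvSeq f) (hg : InvSeq g) : InvSeq (glue k f g) := by
  intro i
  simp only [glue]
  split_ifs with h1 h2
  · simpa using hf ⟨i, h1⟩
  · omega
  · have := hg ⟨(i:ℕ) - ((k:ℕ)+1), by have hi := i.isLt; have hk := k.isLt; omega⟩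
    simp at this
    omega

lemma glue_mono {n : ℕ} (k : Fin (n+1)) (f : Fin (k:ℕ) → ℕ) (g : Fin (n - (k:ℕ)) → ℕ)
    (hfI : InvSeq f) (hf : Monotone f) (hg : Monotone g) : Monotone (glue k f g) := by
  intro i j hij
  have hij' : (i:ℕ) ≤ (j:ℕ) := hij
  simp only [glue]
  split_ifs with h1 h3 h4 h2 h3 h4 h3 h4
  · exact hf (show (⟨(i:ℕ), h1⟩ : Fin (k:ℕ)) ≤ ⟨(j:ℕ), h3⟩ from hij')
  · have := hfI ⟨(i:ℕ), h1⟩; simp at this; omega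
  · have := hfI ⟨(i:ℕ), h1⟩; simp at this; omega
  · omega
  · omega
  · omega
  · omega
  · omega
  · have : (⟨(i:ℕ) - ((k:ℕ)+1), by have := i.isLt; omega⟩ : Fin (n - (k:ℕ))) ≤
        ⟨(j:ℕ) - ((k:ℕ)+1), by have := j.isLt; omega⟩ := by
      simp [Fin.mk_le_mk]; omega
    exact Nat.add_le_add_right (hg this) _

abbrev MSub (n : ℕ) := {e : Fin n → ℕ // InvSeq e ∧ Monotone e}

instance finite_msub (n : ℕ) : Finite (MSub n) := by
  apply Finite.of_injective (fun x => (fun i => (⟨x.1 i, by have := x.2.1 i; have := i.isLt; omega⟩ : Fin (n+1)) : Fin n → Fin (n+1)))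
  intro x y h
  ext i
  have := congrFun h i
  simpa [Fin.mk.injEq] using this

/-- largest saturated index -/
def Ksat {n : ℕ} (x : MSub (n+1)) : Fin (n+1) :=
  (Finset.univ.filter (fun i : Fin (n+1) => x.1 i = (i:ℕ))).max'
    ⟨0, by simp; have := x.2.1 0; simpa using Nat.le_zero.mp (by simpa using this)⟩

lemma Ksat_spec {n : ℕ} (x : MSub (n+1)) : x.1 (Ksat x) = ((Ksat x : Fin (n+1)) : ℕ) := by
  have := Finset.max'_mem (Finset.univ.filter (fun i : Fin (n+1) => x.1 i = (i:ℕ)))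
    ⟨0, by simp; have := x.2.1 0; simpa using Nat.le_zero.mp (by simpa using this)⟩
  simpa [Ksat] using (Finset.mem_filter.mp this).2

lemma Ksat_max {n : ℕ} (x : MSub (n+1)) (i : Fin (n+1)) (h : x.1 i = (i:ℕ)) : i ≤ Ksat x :=
  Finset.le_max' _ i (by simp [h])

lemma lt_of_gt_Ksat {n : ℕ} (x : MSub (n+1)) (i : Fin (n+1)) (h : Ksat x < i) :
    x.1 i < (i:ℕ) := by
  have h1 := x.2.1 i
  rcases lt_or_eq_of_le h1 with h2 | h2
  · exact h2
  · exact absurd (Ksat_max x i h2) (not_le.mpr h)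

lemma glue_gt {n : ℕ} (k : Fin (n+1)) (f : Fin (k:ℕ) → ℕ) (g : Fin (n - (k:ℕ)) → ℕ)
    (i : Fin (n+1)) (h : (k:ℕ) < (i:ℕ)) :
    glue k f g i = g ⟨(i:ℕ) - ((k:ℕ)+1), by have := i.isLt; omega⟩ + k := by
  simp only [glue]
  rw [dif_neg (by omega), dif_neg (by omega)]

lemma glue_Ksat {n : ℕ} (k : Fin (n+1)) (f : Fin (k:ℕ) → ℕ) (g : Fin (n - (k:ℕ)) → ℕ)
    (hfI : InvSeq f) (hgI : InvSeq g) (hf : Monotone f) (hg : Monotone g) :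
    Ksat ⟨glue k f g, glue_invSeq k f g hfI hgI, glue_mono k f g hfI hf hg⟩ = k := by
  set x : MSub (n+1) := ⟨glue k f g, glue_invSeq k f g hfI hgI, glue_mono k f g hfI hf hg⟩
  have hk : x.1 k = (k:ℕ) := by
    simp only [x, glue]
    rw [dif_neg (by omega)]
    simp
  apply le_antisymm
  · by_contra hcon
    push_neg at hcon
    have h2 := Ksat_spec x
    have h3 : (k:ℕ) < ((Ksat x : Fin (n+1)) : ℕ) := hcon
    rw [show x.1 (Ksat x) = glue k f g (Ksat x) from rfl, glue_gt k f g _ h3] at h2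
    have := hgI ⟨((Ksat x : Fin (n+1)) : ℕ) - ((k:ℕ)+1), by have := (Ksat x).isLt; omega⟩
    simp at this
    omega
  · exact Ksat_max x k hk

def fiberEquiv (n : ℕ) (k : Fin (n+1)) :
    {x : MSub (n+1) // Ksat x = k} ≃ (MSub (k:ℕ) × MSub (n - (k:ℕ))) where
  toFun x :=
    (⟨fun i => x.1.1 ⟨i, by have := i.isLt; have := k.isLt; omega⟩,
      fun i => by simpa using x.1.2.1 ⟨i, by have := i.isLt; have := k.isLt; omega⟩,
      fun i j hij => x.1.2.2 (show (⟨(i:ℕ), _⟩ : Fin (n+1)) ≤ ⟨(j:ℕ), _⟩ from hij)⟩,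
     ⟨fun j => x.1.1 ⟨(k:ℕ)+1+j, by have := j.isLt; omega⟩ - k,
      fun j => by
        have h1 := lt_of_gt_Ksat x.1 ⟨(k:ℕ)+1+j, by have := j.isLt; omega⟩
          (by rw [x.2]; exact (Fin.lt_iff_val_lt_val.mpr (by simp; omega)))
        simp at h1 ⊢
        omega,
      fun i j hij => by
        have hij' : (i:ℕ) ≤ (j:ℕ) := hij
        have := x.1.2.2 (show (⟨(k:ℕ)+1+(i:ℕ), by have := i.isLt; omega⟩ : Fin (n+1)) ≤
          ⟨(k:ℕ)+1+(j:ℕ), by have := j.isLt; omega⟩ from by simp [Fin.mk_le_mk]; omega)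
        exact Nat.sub_le_sub_right this _⟩)
  invFun fg :=
    ⟨⟨glue k fg.1.1 fg.2.1, glue_invSeq k _ _ fg.1.2.1 fg.2.2.1,
      glue_mono k _ _ fg.1.2.1 fg.1.2.2 fg.2.2.2⟩,
     glue_Ksat k _ _ fg.1.2.1 fg.2.2.1 fg.1.2.2 fg.2.2.2⟩
  left_inv x := by
    apply Subtype.ext
    apply Subtype.ext
    funext i
    show glue k _ _ i = x.1.1 i
    simp only [glue]
    split_ifs with h1 h2
    · congr 1
    · have := Ksat_spec x.1
      rw [x.2] at this
      have hik : i = k := Fin.ext h2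
      rw [hik, this]
    · have hke : x.1.1 k = (k:ℕ) := by
        have := Ksat_spec x.1; rwa [x.2] at this
      have hmono : x.1.1 k ≤ x.1.1 i := x.1.2.2 (show k ≤ i from by
        rw [Fin.le_iff_val_le_val]; omega)
      have harith : ((⟨(k:ℕ)+1+((i:ℕ) - ((k:ℕ)+1)), by have := i.isLt; omega⟩ : Fin (n+1))) = i := by
        apply Fin.ext; simp; omega
      rw [harith]
      omega
  right_inv fg := by
    ext : 1
    · apply Subtype.ext
      funext i
      show glue k _ _ _ = fg.1.1 i
      simp only [glue]
      rw [dif_pos (by simpa using i.isLt)]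
    · apply Subtype.ext
      funext j
      show glue k _ _ _ - (k:ℕ) = fg.2.1 j
      rw [glue_gt k _ _ _ (by simp; omega)]
      rw [Nat.add_sub_cancel]
      congr 1
      apply congrArg
      apply Fin.ext
      simp

noncomputable def mcount (n : ℕ) : ℕ := Nat.card (MSub n)

lemma nat_card_sigma {m : ℕ} (F : Fin m → Type) [∀ k, Finite (F k)] :
    Nat.card ((k : Fin m) × F k) = ∑ k, Nat.card (F k) := by
  letI : ∀ k, Fintype (F k) := fun k => Fintype.ofFinite _
  simp [Nat.card_eq_fintype_card, Fintype.card_sigma]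

lemma mcount_zero : mcount 0 = 1 := by
  have : Unique (MSub 0) := {
    default := ⟨Fin.elim0, fun i => i.elim0, fun i => i.elim0⟩
    uniq := fun x => Subtype.ext (funext fun i => i.elim0) }
  exact Nat.card_unique

lemma mcount_succ (n : ℕ) :
    mcount (n+1) = ∑ k : Fin (n+1), mcount (k:ℕ) * mcount (n - (k:ℕ)) := by
  have e1 : MSub (n+1) ≃ (k : Fin (n+1)) × {x : MSub (n+1) // Ksat x = k} :=
    (Equiv.sigmaFiberEquiv Ksat).symm
  rw [mcount, Nat.card_congr e1, nat_card_sigma]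
  apply Finset.sum_congr rfl
  intro k _
  rw [Nat.card_congr (fiberEquiv n k), Nat.card_prod]
  rfl

lemma mcount_eq_catalan (n : ℕ) : mcount n = catalan n := by
  induction n using Nat.strong_induction_on with
  | _ n ih =>
    match n with
    | 0 => simpa using mcount_zero
    | (m+1) =>
      rw [mcount_succ, catalan_succ]
      apply Finset.sum_congr rfl
      intro k _
      rw [ih (k:ℕ) (by have := k.isLt; omega), ih (m - (k:ℕ)) (by omega)]

/-- each nonzero entry is a strict left-to-right maximum -/
def AProp {n : ℕ} (e : Fin n → ℕ) : Prop :=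
  ∀ b c : Fin n, b < c → e c = 0 ∨ e b < e c

def runMax {n : ℕ} (e : Fin n → ℕ) (i : Fin n) : ℕ :=
  (Finset.univ.filter (fun j => j ≤ i)).sup e

lemma runMax_le {n : ℕ} (e : Fin n → ℕ) (i : Fin n) (m : ℕ)
    (h : ∀ j, j ≤ i → e j ≤ m) : runMax e i ≤ m :=
  Finset.sup_le (fun j hj => h j (Finset.mem_filter.mp hj).2)

lemma le_runMax {n : ℕ} (e : Fin n → ℕ) {i j : Fin n} (h : j ≤ i) : e j ≤ runMax e i :=
  Finset.le_sup (Finset.mem_filter.mpr ⟨Finset.mem_univ _, h⟩)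

lemma runMax_mono {n : ℕ} (e : Fin n → ℕ) : Monotone (runMax e) := by
  intro i j hij
  apply Finset.sup_mono
  intro a ha
  simp only [Finset.mem_filter, Finset.mem_univ, true_and] at ha ⊢
  exact le_trans ha hij

def deA {n : ℕ} (m : Fin n → ℕ) (i : Fin n) : ℕ :=
  if ∃ j, j < i ∧ m j = m i then 0 else m i

lemma deA_le {n : ℕ} (m : Fin n → ℕ) (i : Fin n) : deA m i ≤ m i := by
  unfold deA; split_ifs <;> omega

/-- the equivalence between A-type inversion sequences and monotone ones -/
noncomputable def AEquiv (n : ℕ) : {e : Fin n → ℕ // InvSeq e ∧ AProp e} ≃ MSub n where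
  toFun x := ⟨runMax x.1,
    fun i => runMax_le x.1 i _ (fun j hj => le_trans (x.2.1 j) hj),
    runMax_mono x.1⟩
  invFun x := ⟨deA x.1,
    fun i => le_trans (deA_le x.1 i) (x.2.1 i),
    by
      intro b c hbc
      by_cases hc : deA x.1 c = 0
      · exact Or.inl hc
      · right
        have hcdef : deA x.1 c = x.1 c := by
          unfold deA at hc ⊢; split_ifs at hc ⊢ with h; · omega
          · rfl
        have hnex : ¬ ∃ j, j < c ∧ x.1 j = x.1 c := by
          unfold deA at hc; split_ifs at hc with h; · omega
          · exact h
        push_neg at hnex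
        have hbne : x.1 b ≠ x.1 c := hnex b hbc
        have hble : x.1 b ≤ x.1 c := x.2.2 (le_of_lt hbc)
        calc deA x.1 b ≤ x.1 b := deA_le _ _
          _ < x.1 c := lt_of_le_of_ne hble hbne
          _ = deA x.1 c := hcdef.symm⟩
  left_inv x := by
    apply Subtype.ext
    funext i
    obtain ⟨e, heI, heA⟩ := x
    show deA (runMax e) i = e i
    by_cases hz : e i = 0
    · rw [hz]
      by_cases h0 : (i:ℕ) = 0
      · have hM : runMax e i = 0 := by
          apply Nat.le_zero.mp
          apply runMax_le
          intro j hj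
          have : (j:ℕ) ≤ (i:ℕ) := hj
          have : (j:ℕ) = 0 := by omega
          have hji : j = i := Fin.ext (by omega)
          rw [hji, hz]
        unfold deA
        split_ifs <;> omega
      · -- i > 0 : runMax e i = runMax e (i-1), so the condition holds
        have hn0 : 0 < n := i.pos
        set i' : Fin n := ⟨(i:ℕ) - 1, by have := i.isLt; omega⟩ with hi'
        have hlt : i' < i := by rw [Fin.lt_iff_val_lt_val]; simp [hi']; omega
        have hMM : runMax e i' = runMax e i := by
          apply le_antisymm (runMax_mono e (le_of_lt hlt))
          apply runMax_le
          intro j hj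
          by_cases hji : j = i
          · rw [hji, hz]; exact Nat.zero_le _
          · apply le_runMax
            have h1 : (j:ℕ) ≤ (i:ℕ) := hj
            have h2 : (j:ℕ) ≠ (i:ℕ) := fun hc => hji (Fin.ext hc)
            show (j:ℕ) ≤ (i':ℕ)
            simp [hi']
            omega
        unfold deA
        rw [if_pos ⟨i', hlt, hMM⟩]
    · -- e i ≠ 0 : e i is a strict max, runMax e i = e i and earlier runMax values smaller
      have hstrict : ∀ j, j < i → e j < e i := by
        intro j hj
        rcases heA j i hj with h | h
        · omega
        · exact h
      have hM : runMax e i = e i := by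
        apply le_antisymm
        · apply runMax_le
          intro j hj
          rcases lt_or_eq_of_le hj with h | h
          · exact le_of_lt (hstrict j h)
          · rw [h]
        · exact le_runMax e (le_refl i)
      have hcond : ¬ ∃ j, j < i ∧ runMax e j = runMax e i := by
        rintro ⟨j, hj, hMj⟩
        have : runMax e j < e i := by
          have h1 : runMax e j ≤ e i - 1 := by
            apply runMax_le
            intro a ha
            have := hstrict a (lt_of_le_of_lt ha hj)
            omega
          omega
        omega
      unfold deA
      rw [if_neg hcond, hM]
  right_inv x := by
    apply Subtype.ext
    funext i
    obtain ⟨m, hmI, hmM⟩ := x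
    show runMax (deA m) i = m i
    apply le_antisymm
    · apply runMax_le
      intro j hj
      exact le_trans (deA_le m j) (hmM hj)
    · -- take the first occurrence of the value m i
      have hne : (Finset.univ.filter (fun j : Fin n => m j = m i)).Nonempty := ⟨i, by simp⟩
      set j0 := (Finset.univ.filter (fun j : Fin n => m j = m i)).min' hne with hj0
      have hj0mem := Finset.min'_mem _ hne
      have hj0v : m j0 = m i := (Finset.mem_filter.mp hj0mem).2
      have hj0le : j0 ≤ i := Finset.min'_le _ i (by simp)
      have hj0first : ¬ ∃ j, j < j0 ∧ m j = m j0 := by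
        rintro ⟨j, hj, hjv⟩
        have : j0 ≤ j := Finset.min'_le _ j (by simp [hjv, hj0v])
        exact absurd hj (not_lt.mpr this)
      have : deA m j0 = m i := by
        unfold deA
        rw [if_neg hj0first, hj0v]
      calc m i = deA m j0 := this.symm
        _ ≤ runMax (deA m) i := le_runMax _ hj0le

lemma strictMono3 {n : ℕ} {a b c : Fin n} (hab : a < b) (hbc : b < c) :
    StrictMono (![a, b, c]) := by
  have hac := lt_trans hab hbc
  intro u v huv
  fin_cases u <;> fin_cases v <;>
    first
      | exact absurd huv (by decide)
      | simpa using hab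
      | simpa using hbc
      | simpa using hac

lemma avoidsA_iff {n : ℕ} (e : Fin n → ℕ) (he : InvSeq e) :
    (Avoids e [0,1,1] ∧ Avoids e [0,2,1]) ↔ AProp e := by
  constructor
  · rintro ⟨h1, h2⟩
    intro b c hbc
    by_contra hcon
    push_neg at hcon
    obtain ⟨hc0, hbe⟩ := hcon
    -- e c ≠ 0, e c ≤ e b
    have hn : 0 < n := b.pos
    have hb1 : 1 ≤ (b:ℕ) := by
      have h3 := he b
      omega
    set a : Fin n := ⟨0, hn⟩ with ha
    have hea : e a = 0 := Nat.le_zero.mp (he a)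
    have hab : a < b := by rw [Fin.lt_iff_val_lt_val]; simp [ha]; omega
    rcases Nat.lt_or_ge (e c) (e b) with hlt | hge
    · -- pattern 021
      apply h2
      refine ⟨![a, b, c], strictMono3 hab hbc, ?_⟩
      intro x y
      fin_cases x <;> fin_cases y <;>
        constructor <;> constructor <;> intro h <;>
          simp_all <;> omega
    · -- e b = e c : pattern 011
      have heq : e b = e c := by omega
      apply h1
      refine ⟨![a, b, c], strictMono3 hab hbc, ?_⟩
      intro x y
      fin_cases x <;> fin_cases y <;>
        constructor <;> constructor <;> intro h <;>
          simp_all <;> omega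
  · intro hA
    refine ⟨fun hC => ?_, fun hC => ?_⟩ <;> obtain ⟨s, hs, hcond⟩ := hC
    · -- pattern 011
      have h01 := (hcond ⟨0, by norm_num⟩ ⟨1, by norm_num⟩).1
      have h12 := (hcond ⟨1, by norm_num⟩ ⟨2, by norm_num⟩).2
      simp at h01 h12
      have hlt : s ⟨1, by norm_num⟩ < s ⟨2, by norm_num⟩ := hs (Fin.mk_lt_mk.mpr (by norm_num))
      rcases hA _ _ hlt with h | h <;> simp at h <;> omega
    · -- pattern 021
      have h02 := (hcond ⟨0, by norm_num⟩ ⟨2, by norm_num⟩).1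
      have h21 := (hcond ⟨2, by norm_num⟩ ⟨1, by norm_num⟩).1
      simp at h02 h21
      have hlt : s ⟨1, by norm_num⟩ < s ⟨2, by norm_num⟩ := hs (Fin.mk_lt_mk.mpr (by norm_num))
      rcases hA _ _ hlt with h | h <;> simp at h <;> omega

lemma avoidsB_iff {n : ℕ} (e : Fin n → ℕ) (he : InvSeq e) :
    (Avoids e [0,1,0] ∧ Avoids e [0,2,1]) ↔ Monotone e := by
  constructor
  · rintro ⟨h1, h2⟩
    intro b c hbc
    by_contra hcon
    push_neg at hcon
    have hbc' : b < c := lt_of_le_of_ne hbc (fun h => by rw [h] at hcon; omega)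
    have hn : 0 < n := b.pos
    have hb1 : 1 ≤ (b:ℕ) := by
      have h3 := he b
      omega
    set a : Fin n := ⟨0, hn⟩ with ha
    have hea : e a = 0 := Nat.le_zero.mp (he a)
    have hab : a < b := by rw [Fin.lt_iff_val_lt_val]; simp [ha]; omega
    rcases Nat.eq_zero_or_pos (e c) with hc0 | hc0
    · -- pattern 010
      apply h1
      refine ⟨![a, b, c], strictMono3 hab hbc', ?_⟩
      intro x y
      fin_cases x <;> fin_cases y <;>
        constructor <;> constructor <;> intro h <;>
          simp_all <;> omega
    · -- pattern 021
      apply h2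
      refine ⟨![a, b, c], strictMono3 hab hbc', ?_⟩
      intro x y
      fin_cases x <;> fin_cases y <;>
        constructor <;> constructor <;> intro h <;>
          simp_all <;> omega
  · intro hM
    refine ⟨fun hC => ?_, fun hC => ?_⟩ <;> obtain ⟨s, hs, hcond⟩ := hC
    · -- pattern 010
      have h01 := (hcond ⟨0, by norm_num⟩ ⟨1, by norm_num⟩).1
      have h02 := (hcond ⟨0, by norm_num⟩ ⟨2, by norm_num⟩).2
      simp at h01 h02
      have hlt : s ⟨1, by norm_num⟩ ≤ s ⟨2, by norm_num⟩ :=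
        le_of_lt (hs (Fin.mk_lt_mk.mpr (by norm_num)))
      have := hM hlt
      simp at this
      omega
    · -- pattern 021
      have h21 := (hcond ⟨2, by norm_num⟩ ⟨1, by norm_num⟩).1
      simp at h21
      have hlt : s ⟨1, by norm_num⟩ ≤ s ⟨2, by norm_num⟩ :=
        le_of_lt (hs (Fin.mk_lt_mk.mpr (by norm_num)))
      have := hM hlt
      simp at this
      omega

theorem stmt_7 (n : ℕ) (hn : 1 ≤ n) (p q : List ℕ)
    (hpq : (p, q) = ([0,1,1], [0,2,1]) ∨ (p, q) = ([0,1,0], [0,2,1])) :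
    Nat.card {e : Fin n → ℕ // InvSeq e ∧ Avoids e p ∧ Avoids e q}
      = catalan n := by
  simp only [Prod.mk.injEq] at hpq
  rcases hpq with ⟨rfl, rfl⟩ | ⟨rfl, rfl⟩
  · -- (011, 021) : A-type sequences
    have h1 : Nat.card {e : Fin n → ℕ // InvSeq e ∧ Avoids e [0,1,1] ∧ Avoids e [0,2,1]}
        = Nat.card {e : Fin n → ℕ // InvSeq e ∧ AProp e} := by
      apply Nat.card_congr
      apply Equiv.subtypeEquivRight
      intro e
      constructor
      · rintro ⟨hI, hav⟩; exact ⟨hI, (avoidsA_iff e hI).mp hav⟩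
      · rintro ⟨hI, hA⟩; exact ⟨hI, (avoidsA_iff e hI).mpr hA⟩
    rw [h1, Nat.card_congr (AEquiv n)]
    exact mcount_eq_catalan n
  · -- (010, 021) : monotone sequences
    have h1 : Nat.card {e : Fin n → ℕ // InvSeq e ∧ Avoids e [0,1,0] ∧ Avoids e [0,2,1]}
        = Nat.card (MSub n) := by
      apply Nat.card_congr
      apply Equiv.subtypeEquivRight
      intro e
      constructor
      · rintro ⟨hI, hav⟩; exact ⟨hI, (avoidsB_iff e hI).mp hav⟩
      · rintro ⟨hI, hM⟩; exact ⟨hI, (avoidsB_iff e hI).mpr hM⟩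
    rw [h1]
    exact mcount_eq_catalan n
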